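/- Let 0 < p < 2, let w be a nonnegative locally integrable function on ℝⁿ, let k₀ ∈ ℤ, and let A, c, c₀ > 0. Suppose that for each integer k ≤ k₀ and each index i, b^k_i is a measurable function supported in a cube Q^k_i with ‖b^k_i‖_{L^∞} ≤ A·2^k, Σ_i w(Q^k_i) ≤ c·2^{−kp}, and Σ_i χ_{Q^k_i}(x) ≤ c₀ for all x ∈ ℝⁿ. Then the function F₁ = Σ_{k=−∞}^{k₀} Σ_i b^k_i satisfies ‖F₁‖_{L²_w} ≤ C·A·c₀^{1/2}·c^{1/2}·2^{k₀(1−p/2)}, where C depends only on p. -/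

import Mathlib

open MeasureTheory Set Filter
open scoped ENNReal NNReal Topology

noncomputable section

/-- Euclidean space `ℝⁿ`. -/
abbrev En (n : ℕ) := EuclideanSpace ℝ (Fin n)

/-- The cube centered at `x₀` with side length `r`, sides parallel to the axes. -/
def cube {n : ℕ} (x₀ : En n) (r : ℝ) : Set (En n) := {x | ∀ i, |x i - x₀ i| ≤ r / 2}

/-- Weighted measure of a set: `w(E) = ∫_E w`. -/
def wMeas {n : ℕ} (w : En n → ℝ) (S : Set (En n)) : ℝ≥0∞ := ∫⁻ x in S, ENNReal.ofReal (w x)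

/-- A weight: a nonnegative locally integrable function. -/
def IsWeight {n : ℕ} (w : En n → ℝ) : Prop := (∀ x, 0 ≤ w x) ∧ LocallyIntegrable w volume

/-- Average of `g` over a set. -/
def avgOn {n : ℕ} (g : En n → ℝ) (S : Set (En n)) : ℝ := (volume S).toReal⁻¹ * ∫ x in S, g x

/-- The Muckenhoupt `A_1` condition. -/
def IsA1 {n : ℕ} (w : En n → ℝ) : Prop :=
  ∃ C : ℝ, ∀ (x₀ : En n) (r : ℝ), 0 < r →
    avgOn w (cube x₀ r) ≤ C * essInf w (volume.restrict (cube x₀ r))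

/-- The Muckenhoupt `A_q` condition for `1 < q`, with constant `C`. -/
def IsAqStrictWith {n : ℕ} (q : ℝ) (w : En n → ℝ) (C : ℝ) : Prop :=
  ∀ (x₀ : En n) (r : ℝ), 0 < r →
    avgOn w (cube x₀ r) * (avgOn (fun x => w x ^ (-(1 / (q - 1)))) (cube x₀ r)) ^ (q - 1) ≤ C

/-- The Muckenhoupt `A_q` condition for `1 < q`. -/
def IsAqStrict {n : ℕ} (q : ℝ) (w : En n → ℝ) : Prop := ∃ C : ℝ, IsAqStrictWith q w C

/-- The Muckenhoupt class `A_q` for `q ≥ 1`. -/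
def IsAq {n : ℕ} (q : ℝ) (w : En n → ℝ) : Prop :=
  IsWeight w ∧ ((q = 1 ∧ IsA1 w) ∨ (1 < q ∧ IsAqStrict q w))

/-- The class `A_∞`. -/
def IsAinfty {n : ℕ} (w : En n → ℝ) : Prop := ∃ q : ℝ, 1 < q ∧ IsAq q w

/-- The critical index `q_w = inf {q > 1 : w ∈ A_q}`. -/
def criticalIndex {n : ℕ} (w : En n → ℝ) : ℝ := sInf {q : ℝ | 1 < q ∧ IsAq q w}

/-- The reverse Hölder class `RH_s`. -/
def IsRH {n : ℕ} (s : ℝ) (w : En n → ℝ) : Prop :=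
  IsWeight w ∧ ∃ C : ℝ, 0 < C ∧ ∀ (x₀ : En n) (r : ℝ), 0 < r →
    (avgOn (fun x => w x ^ s) (cube x₀ r)) ^ (1 / s) ≤ C * avgOn w (cube x₀ r)

/-- The weighted weak-`L^p` quasinorm of an `ℝ≥0∞`-valued function. -/
def wkNormE {n : ℕ} (w : En n → ℝ) (p : ℝ) (g : En n → ℝ≥0∞) : ℝ≥0∞ :=
  ⨆ (t : ℝ) (_ : 0 < t), ENNReal.ofReal t * (wMeas w {x | ENNReal.ofReal t < g x}) ^ (1 / p)

/-- The weighted weak-`L^p` quasinorm `‖f‖_{WL^p_w} = sup_{λ>0} λ w({|f|>λ})^{1/p}`. -/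
def wkNorm {n : ℕ} (w : En n → ℝ) (p : ℝ) (f : En n → ℝ) : ℝ≥0∞ :=
  wkNormE w p (fun x => (‖f x‖₊ : ℝ≥0∞))

/-- `N = [n(q_w/p - 1)]`. -/
def NIndex {n : ℕ} (w : En n → ℝ) (p : ℝ) : ℕ := Nat.floor ((n : ℝ) * (criticalIndex w / p - 1))

/-- The test class `𝒜_{N,w}` of Schwartz functions with normalized derivatives. -/
def calA (n : ℕ) (w : En n → ℝ) (p : ℝ) : Set (SchwartzMap (En n) ℝ) :=
  {φ | ∀ x : En n, ∀ k : ℕ, k ≤ NIndex w p + 1 →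
      (1 + ‖x‖) ^ (NIndex w p + n + 1) * ‖iteratedFDeriv ℝ k (φ : En n → ℝ) x‖ ≤ 1}

/-- The grand maximal function of a (locally integrable) function:
`G_w f(x) = sup_{φ ∈ 𝒜_{N,w}} sup_{|y-x|<t} |(φ_t * f)(y)|`, where `φ_t(x) = t^{-n} φ(x/t)`. -/
def grandMaxFn (n : ℕ) (w : En n → ℝ) (p : ℝ) (f : En n → ℝ) (x : En n) : ℝ≥0∞ :=
  ⨆ (φ : SchwartzMap (En n) ℝ) (_ : φ ∈ calA n w p) (t : ℝ) (_ : 0 < t) (y : En n)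
    (_ : dist y x < t),
    (‖∫ z, t ^ (-(n : ℝ)) * φ (t⁻¹ • (y - z)) * f z‖₊ : ℝ≥0∞)

/-- The grand maximal function of a tempered distribution `f`:
`G_w f(x) = sup_{φ ∈ 𝒜_{N,w}} sup_{|y-x|<t} |(φ_t * f)(y)|`, where
`(φ_t * f)(y) = ⟨f, t^{-n} φ((y - ·)/t)⟩`. -/
def grandMaxDist (n : ℕ) (w : En n → ℝ) (p : ℝ) (f : SchwartzMap (En n) ℝ →L[ℝ] ℝ)
    (x : En n) : ℝ≥0∞ :=
  ⨆ (φ : SchwartzMap (En n) ℝ) (_ : φ ∈ calA n w p) (t : ℝ) (_ : 0 < t) (y : En n)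
    (_ : dist y x < t) (ψ : SchwartzMap (En n) ℝ)
    (_ : ∀ z, (ψ : En n → ℝ) z = t ^ (-(n : ℝ)) * φ (t⁻¹ • (y - z))),
    (‖f ψ‖₊ : ℝ≥0∞)

/-- The weighted weak Hardy quasinorm of a function. -/
def WHpNormFn (n : ℕ) (w : En n → ℝ) (p : ℝ) (f : En n → ℝ) : ℝ≥0∞ :=
  wkNormE w p (grandMaxFn n w p f)

/-- The weighted weak Hardy quasinorm of a tempered distribution. -/
def WHpNormDist (n : ℕ) (w : En n → ℝ) (p : ℝ) (f : SchwartzMap (En n) ℝ →L[ℝ] ℝ) : ℝ≥0∞ :=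
  wkNormE w p (grandMaxDist n w p f)

/-- The normalized surface measure `dσ` on the unit sphere `S^{n-1}`. -/
def sigmaN (n : ℕ) : Measure (Metric.sphere (0 : En n) 1) :=
  ((volume : Measure (En n)).toSphere Set.univ)⁻¹ • (volume : Measure (En n)).toSphere

/-- `sup_{y' ∈ S^{n-1}, |y'-z'| ≤ δ} |Ω(x+ρz', y') - Ω(x+ρz', z')|`. -/
def omegaSupIn (n : ℕ) (Ω : En n → En n → ℝ) (δ : ℝ) (x : En n) (ρ : ℝ) (z' : En n) : ℝ :=
  sSup {a : ℝ | ∃ y' : En n, ‖y'‖ = 1 ∧ ‖y' - z'‖ ≤ δ ∧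
    a = |Ω (x + ρ • z') y' - Ω (x + ρ • z') z'|}

/-- The integral modulus of continuity of order `r` of `Ω`. -/
def omegaR (n : ℕ) (r : ℝ) (Ω : En n → En n → ℝ) (δ : ℝ) : ℝ :=
  sSup {a : ℝ | ∃ (x : En n) (ρ : ℝ), 0 ≤ ρ ∧
    a = (∫ z' : Metric.sphere (0 : En n) 1,
          omegaSupIn n Ω δ x ρ (z' : En n) ^ r ∂(sigmaN n)) ^ (1 / r)}

/-- The `L^{r,β}`-Dini condition on a variable kernel `Ω(x,z)`:
homogeneity of degree `0` in `z`, vanishing mean on the sphere, uniform `L^r` bound on the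
sphere along shifted centers, and the Dini integral `∫₀¹ ω_r(δ)/δ^{1+β} dδ < ∞`. -/
def LrDini (n : ℕ) (r β : ℝ) (Ω : En n → En n → ℝ) : Prop :=
  (∀ (x z : En n) (c : ℝ), 0 < c → Ω x (c • z) = Ω x z) ∧
  (∀ x : En n, ∫ z' : Metric.sphere (0 : En n) 1, Ω x (z' : En n) ∂(sigmaN n) = 0) ∧
  (∃ M : ℝ, ∀ (x : En n) (ρ : ℝ), 0 ≤ ρ →
    (∫ z' : Metric.sphere (0 : En n) 1,
        |Ω (x + ρ • (z' : En n)) (z' : En n)| ^ r ∂(sigmaN n)) ^ (1 / r) ≤ M) ∧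
  IntegrableOn (fun δ : ℝ => omegaR n r Ω δ / δ ^ (1 + β)) (Set.Ioo (0 : ℝ) 1)

/-- The kernel `K(x,z) = Ω(x, z/|z|)/|z|ⁿ`. -/
def Kker (n : ℕ) (Ω : En n → En n → ℝ) (x z : En n) : ℝ := Ω x (‖z‖⁻¹ • z) / ‖z‖ ^ n

/-- Condition (1.2): the `L^r`-Hörmander condition in the second variable. -/
def Hormander12 (n : ℕ) (r : ℝ) (Ω : En n → En n → ℝ) : Prop :=
  ∀ R : ℝ, 0 < R → ∃ B : ℝ, ∀ (x y : En n), 0 < ‖y‖ → ‖y‖ < R → ∀ N : ℕ,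
    ∑ k ∈ Finset.Icc 1 N, ((2 : ℝ) ^ k * R) ^ ((n : ℝ) / (r / (r - 1))) *
      (∫ z in {z : En n | 2 ^ k * R ≤ ‖z‖ ∧ ‖z‖ < 2 ^ (k + 1) * R},
        |Kker n Ω x (z - y) - Kker n Ω x z| ^ r) ^ (1 / r) ≤ B

/-- Condition (1.3): the `L^r`-Hörmander condition in the first variable. -/
def Hormander13 (n : ℕ) (r : ℝ) (Ω : En n → En n → ℝ) : Prop :=
  ∀ R : ℝ, 0 < R → ∃ B : ℝ, ∀ (x y : En n), 0 < ‖x - y‖ → ‖x - y‖ < R → ∀ N : ℕ,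
    ∑ k ∈ Finset.Icc 1 N, ((2 : ℝ) ^ k * R) ^ ((n : ℝ) / (r / (r - 1))) *
      (∫ z in {z : En n | 2 ^ k * R ≤ ‖z‖ ∧ ‖z‖ < 2 ^ (k + 1) * R},
        |Kker n Ω x z - Kker n Ω y z| ^ r) ^ (1 / r) ≤ B

end

lemma aux_enorm_tsum_le {ι : Type*} (f : ι → ℝ) :
    (‖∑' i, f i‖₊ : ℝ≥0∞) ≤ ∑' i, (‖f i‖₊ : ℝ≥0∞) := by
  by_cases h : ∑' i, ((‖f i‖₊ : ℝ≥0) : ℝ≥0∞) = ∞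
  · exact h ▸ le_top
  · have hs : Summable fun i => ‖f i‖₊ := ENNReal.tsum_coe_ne_top_iff_summable.mp h
    have hf : Summable f := by
      rw [← summable_norm_iff]
      simpa [← coe_nnnorm] using NNReal.summable_coe.mpr hs
    rw [← ENNReal.coe_tsum hs]
    exact_mod_cast nnnorm_tsum_le hs

lemma aux_iSup_rpow {a : ℕ → ℝ≥0∞} (ha : Monotone a) {c : ℝ} (hc : 0 ≤ c) :
    (⨆ n, a n) ^ c = ⨆ n, a n ^ c := by
  refine tendsto_nhds_unique ((tendsto_atTop_iSup ha).ennrpow_const c)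
    (tendsto_atTop_iSup fun i j hij => ENNReal.rpow_le_rpow (ha hij) hc)

lemma aux_finset_Lp {α : Type*} [MeasurableSpace α] (μ : Measure α) {ι : Type*} (s : Finset ι)
    (h : ι → α → ℝ≥0∞) (hm : ∀ k, Measurable (h k)) :
    (∫⁻ x, (∑ k ∈ s, h k x) ^ (2 : ℝ) ∂μ) ^ ((1 : ℝ)/2) ≤
      ∑ k ∈ s, (∫⁻ x, (h k x) ^ (2 : ℝ) ∂μ) ^ ((1 : ℝ)/2) := by
  classical
  induction s using Finset.cons_induction with
  | empty =>
      simp [ENNReal.zero_rpow_of_pos, (by norm_num : (0:ℝ) < 2), (by norm_num : (0:ℝ) < 1/2)]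
  | cons a s ha ih =>
      simp only [Finset.sum_cons]
      calc (∫⁻ x, (h a x + ∑ k ∈ s, h k x) ^ (2 : ℝ) ∂μ) ^ ((1 : ℝ)/2)
          ≤ (∫⁻ x, (h a x) ^ (2 : ℝ) ∂μ) ^ ((1 : ℝ)/2)
            + (∫⁻ x, (∑ k ∈ s, h k x) ^ (2 : ℝ) ∂μ) ^ ((1 : ℝ)/2) := by
            have := ENNReal.lintegral_Lp_add_le (μ := μ) (hm a).aemeasurable
              (Finset.measurable_sum s fun k _ => hm k).aemeasurable (one_le_two (α := ℝ))
            simpa using this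
        _ ≤ _ := add_le_add_right ih _

lemma aux_tsum_Lp {α : Type*} [MeasurableSpace α] (μ : Measure α) (h : ℕ → α → ℝ≥0∞)
    (hm : ∀ k, Measurable (h k)) :
    (∫⁻ x, (∑' k, h k x) ^ (2 : ℝ) ∂μ) ^ ((1 : ℝ)/2) ≤
      ∑' k, (∫⁻ x, (h k x) ^ (2 : ℝ) ∂μ) ^ ((1 : ℝ)/2) := by
  have hmono : ∀ x, Monotone fun n => ∑ k ∈ Finset.range n, h k x := fun x i j hij =>
    Finset.sum_le_sum_of_subset (Finset.range_subset_range.mpr hij)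
  have hpt : ∀ x, (∑' k, h k x) ^ (2 : ℝ) =
      ⨆ n, (∑ k ∈ Finset.range n, h k x) ^ (2 : ℝ) := fun x => by
    rw [ENNReal.tsum_eq_iSup_nat, aux_iSup_rpow (hmono x) (by norm_num)]
  calc (∫⁻ x, (∑' k, h k x) ^ (2 : ℝ) ∂μ) ^ ((1 : ℝ)/2)
      = (⨆ n, ∫⁻ x, (∑ k ∈ Finset.range n, h k x) ^ (2 : ℝ) ∂μ) ^ ((1 : ℝ)/2) := by
        rw [show (fun x => (∑' k, h k x) ^ (2 : ℝ)) = fun x =>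
          ⨆ n, (∑ k ∈ Finset.range n, h k x) ^ (2 : ℝ) from funext hpt,
          lintegral_iSup (fun n => ((Finset.measurable_sum _ fun k _ => hm k).pow_const (2 : ℝ)))
            (fun i j hij x => ENNReal.rpow_le_rpow (hmono x hij) (by norm_num))]
    _ = ⨆ n, (∫⁻ x, (∑ k ∈ Finset.range n, h k x) ^ (2 : ℝ) ∂μ) ^ ((1 : ℝ)/2) := by
        refine aux_iSup_rpow (fun i j hij => lintegral_mono fun x =>
          ENNReal.rpow_le_rpow (hmono x hij) (by norm_num)) (by norm_num)
    _ ≤ ∑' k, (∫⁻ x, (h k x) ^ (2 : ℝ) ∂μ) ^ ((1 : ℝ)/2) := by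
        refine iSup_le fun n => (aux_finset_Lp μ (Finset.range n) h hm).trans ?_
        exact ENNReal.sum_le_tsum _

/-- estimate (3.1): Let `0 < p < 2`.  There is `C > 0`, depending only on
`p`, such that for any weight `w`, `k₀ ∈ ℤ`, `A, c, c₀ > 0` and functions `b^k_i` (for
`k ≤ k₀`) supported in cubes `Q^k_i` with `‖b^k_i‖_∞ ≤ A 2^k`, `Σ_i w(Q^k_i) ≤ c 2^{-kp}`
and overlap `Σ_i χ_{Q^k_i} ≤ c₀`, the function `F₁ = Σ_{k ≤ k₀} Σ_i b^k_i` satisfies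
`‖F₁‖_{L²_w} ≤ C A c₀^{1/2} c^{1/2} 2^{k₀(1-p/2)}`. -/
theorem F1_weighted_L2_estimate (p : ℝ) (hp0 : 0 < p) (hp2 : p < 2) :
    ∃ C : ℝ, 0 < C ∧
      ∀ (n : ℕ) (w : En n → ℝ), IsWeight w →
      ∀ (k₀ : ℤ) (A c c₀ : ℝ), 0 < A → 0 < c → 0 < c₀ →
      ∀ (b : ℤ → ℕ → En n → ℝ) (xc : ℤ → ℕ → En n) (rc : ℤ → ℕ → ℝ),
        (∀ k ≤ k₀, ∀ i : ℕ, Measurable (b k i)) →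
        (∀ k ≤ k₀, ∀ i : ℕ, Function.support (b k i) ⊆ cube (xc k i) (rc k i)) →
        (∀ k ≤ k₀, ∀ i : ℕ, eLpNorm (b k i) ⊤ volume ≤ ENNReal.ofReal (A * 2 ^ k)) →
        (∀ k ≤ k₀, ∑' i : ℕ, wMeas w (cube (xc k i) (rc k i))
            ≤ ENNReal.ofReal (c * (2 : ℝ) ^ (-(k : ℝ) * p))) →
        (∀ k ≤ k₀, ∀ (x : En n) (s : Finset ℕ),
            (∀ i ∈ s, x ∈ cube (xc k i) (rc k i)) → (s.card : ℝ) ≤ c₀) →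
        (∫⁻ x : En n,
            (‖∑' (k : {m : ℤ // m ≤ k₀}) (i : ℕ), b k.1 i x‖₊ : ℝ≥0∞) ^ (2 : ℝ) *
              ENNReal.ofReal (w x)) ^ ((1 : ℝ) / 2)
          ≤ ENNReal.ofReal
              (C * A * c₀ ^ ((1 : ℝ) / 2) * c ^ ((1 : ℝ) / 2) *
                (2 : ℝ) ^ ((k₀ : ℝ) * (1 - p / 2))) := by
  classical
  have hr0 : (0:ℝ) < 2 ^ (p/2 - 1) := Real.rpow_pos_of_pos two_pos _
  have hr1 : (2:ℝ) ^ (p/2 - 1) < 1 :=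
    Real.rpow_lt_one_of_one_lt_of_neg one_lt_two (by linarith)
  set r : ℝ := (2:ℝ) ^ (p/2 - 1) with hrdef
  refine ⟨(1 - r)⁻¹, inv_pos.mpr (by linarith), ?_⟩
  intro n w hw k₀ A c c₀ hA hc hc₀ b xc rc hbm hbs hbe hws hover
  set μ := (volume : Measure (En n)).withDensity (fun x => ENNReal.ofReal (w x)) with hμdef
  have hw_aem : AEMeasurable (fun x => ENNReal.ofReal (w x)) (volume : Measure (En n)) :=
    (hw.2.aestronglyMeasurable.aemeasurable).ennreal_ofReal
  have hμg : ∀ g : En n → ℝ≥0∞, ∫⁻ x, g x * ENNReal.ofReal (w x) = ∫⁻ x, g x ∂μ := by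
    intro g
    rw [hμdef, lintegral_withDensity_eq_lintegral_mul_non_measurable₀ _ hw_aem
      (ae_of_all _ fun x => ENNReal.ofReal_lt_top) g]
    exact lintegral_congr fun x => mul_comm _ _
  have hcube : ∀ (x₀ : En n) (ρ : ℝ), MeasurableSet (cube x₀ ρ) := by
    intro x₀ ρ
    have : cube x₀ ρ = ⋂ i, {x : En n | |x i - x₀ i| ≤ ρ / 2} := by
      ext x; simp [cube, Set.mem_iInter]
    rw [this]
    refine MeasurableSet.iInter fun i => ?_
    have hcont : Continuous fun x : En n => |x i - x₀ i| :=
      ((EuclideanSpace.proj (𝕜 := ℝ) i).continuous.sub continuous_const).abs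
    exact measurableSet_le hcont.measurable measurable_const
  have hk' : ∀ j : ℕ, k₀ - (j:ℤ) ≤ k₀ := fun j => by omega
  set h : ℕ → En n → ℝ≥0∞ := fun j x => ∑' i, (‖b (k₀ - j) i x‖₊ : ℝ≥0∞) with hh
  have hhm : ∀ j, Measurable (h j) := fun j =>
    Measurable.ennreal_tsum fun i => (hbm _ (hk' j) i).nnnorm.coe_nnreal_ennreal
  let e : ℕ ≃ {m : ℤ // m ≤ k₀} :=
    { toFun := fun j => ⟨k₀ - j, hk' j⟩
      invFun := fun k => (k₀ - k.1).toNat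
      left_inv := fun j => by simp only; omega
      right_inv := fun k => by
        have := k.2
        ext
        simp only
        omega }
  have hpt : ∀ x : En n,
      (‖∑' (k : {m : ℤ // m ≤ k₀}) (i : ℕ), b k.1 i x‖₊ : ℝ≥0∞) ≤ ∑' j, h j x := by
    intro x
    calc (‖∑' (k : {m : ℤ // m ≤ k₀}) (i : ℕ), b k.1 i x‖₊ : ℝ≥0∞)
        ≤ ∑' (k : {m : ℤ // m ≤ k₀}), (‖∑' i, b k.1 i x‖₊ : ℝ≥0∞) := aux_enorm_tsum_le _
      _ ≤ ∑' (k : {m : ℤ // m ≤ k₀}), ∑' i, (‖b k.1 i x‖₊ : ℝ≥0∞) :=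
          ENNReal.tsum_le_tsum fun k => aux_enorm_tsum_le _
      _ = ∑' j, h j x := (e.tsum_eq fun k => ∑' i, (‖b k.1 i x‖₊ : ℝ≥0∞)).symm
  have hTj : ∀ j : ℕ, (∫⁻ x, (h j x) ^ (2:ℝ) ∂μ) ^ ((1:ℝ)/2)
      ≤ ENNReal.ofReal ((A * c₀ ^ ((1:ℝ)/2) * c ^ ((1:ℝ)/2)) *
          2 ^ (((k₀ - j : ℤ) : ℝ) * (1 - p/2))) := by
    intro j
    set k : ℤ := k₀ - j with hk
    have hkle : k ≤ k₀ := hk' j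
    have hA2 : (0:ℝ) < A * 2 ^ k := by positivity
    set N : En n → ℝ≥0∞ := fun x =>
      ∑' i, (cube (xc k i) (rc k i)).indicator (fun _ => (1:ℝ≥0∞)) x with hN
    have hNm : Measurable N :=
      Measurable.ennreal_tsum fun i => measurable_const.indicator (hcube _ _)
    have hNle : ∀ x, N x ≤ ENNReal.ofReal c₀ := by
      intro x
      rw [hN]
      simp only
      rw [ENNReal.tsum_eq_iSup_sum]
      refine iSup_le fun s => ?_
      have hsum : ∑ i ∈ s, (cube (xc k i) (rc k i)).indicator (fun _ => (1:ℝ≥0∞)) x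
          = ((s.filter fun i => x ∈ cube (xc k i) (rc k i)).card : ℝ≥0∞) := by
        rw [← Finset.sum_boole]
        refine Finset.sum_congr rfl fun i _ => ?_
        simp [Set.indicator_apply]
      rw [hsum]
      have hcard := hover k hkle x (s.filter fun i => x ∈ cube (xc k i) (rc k i))
        (fun i hi => (Finset.mem_filter.mp hi).2)
      calc ((s.filter fun i => x ∈ cube (xc k i) (rc k i)).card : ℝ≥0∞)
          = ENNReal.ofReal ((s.filter fun i => x ∈ cube (xc k i) (rc k i)).card : ℝ) := by
            rw [ENNReal.ofReal_natCast]
        _ ≤ ENNReal.ofReal c₀ := ENNReal.ofReal_le_ofReal hcard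
    have hae : ∀ᵐ x ∂μ, h j x ≤ ENNReal.ofReal (A * 2 ^ k) * N x := by
      have h1 : ∀ᵐ x ∂(volume : Measure (En n)),
          ∀ i, (‖b k i x‖₊ : ℝ≥0∞) ≤ ENNReal.ofReal (A * 2 ^ k) := by
        rw [ae_all_iff]
        intro i
        have hb := hbe k hkle i
        rw [eLpNorm_exponent_top] at hb
        exact (ae_le_eLpNormEssSup (f := b k i)).mono fun x hx => hx.trans hb
      have h2 : ∀ᵐ x ∂μ, ∀ i, (‖b k i x‖₊ : ℝ≥0∞) ≤ ENNReal.ofReal (A * 2 ^ k) :=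
        h1.filter_mono (withDensity_absolutelyContinuous _ _).ae_le
      filter_upwards [h2] with x hx
      calc h j x = ∑' i, (‖b k i x‖₊ : ℝ≥0∞) := rfl
        _ ≤ ∑' i, ENNReal.ofReal (A * 2 ^ k) *
              (cube (xc k i) (rc k i)).indicator (fun _ => (1:ℝ≥0∞)) x := by
            refine ENNReal.tsum_le_tsum fun i => ?_
            by_cases hxc : x ∈ cube (xc k i) (rc k i)
            · simpa [Set.indicator_of_mem hxc] using hx i
            · have hz : b k i x = 0 := by
                by_contra hne
                exact hxc (hbs k hkle i (Function.mem_support.mpr hne))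
              simp [hz, Set.indicator_of_notMem hxc]
        _ = ENNReal.ofReal (A * 2 ^ k) * N x := ENNReal.tsum_mul_left
    have hNint : ∫⁻ x, N x ∂μ ≤ ENNReal.ofReal (c * 2 ^ (-(k:ℝ) * p)) := by
      rw [hN]
      simp only
      rw [lintegral_tsum fun i => (measurable_const.indicator (hcube _ _)).aemeasurable]
      have heq : ∀ i : ℕ, ∫⁻ x, (cube (xc k i) (rc k i)).indicator (fun _ => (1:ℝ≥0∞)) x ∂μ
          = wMeas w (cube (xc k i) (rc k i)) := by
        intro i
        rw [lintegral_indicator (hcube _ _) _, setLIntegral_one, hμdef,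
          withDensity_apply _ (hcube _ _)]
        rfl
      rw [tsum_congr heq]
      exact hws k hkle
    have hint : ∫⁻ x, (h j x) ^ (2:ℝ) ∂μ ≤
        (ENNReal.ofReal (A * 2 ^ k)) ^ (2:ℝ) * ENNReal.ofReal c₀ *
          ENNReal.ofReal (c * 2 ^ (-(k:ℝ) * p)) := by
      calc ∫⁻ x, (h j x) ^ (2:ℝ) ∂μ
          ≤ ∫⁻ x, (ENNReal.ofReal (A * 2 ^ k)) ^ (2:ℝ) * (ENNReal.ofReal c₀ * N x) ∂μ := by
            refine lintegral_mono_ae (hae.mono fun x hx => ?_)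
            calc (h j x) ^ (2:ℝ) ≤ (ENNReal.ofReal (A * 2 ^ k) * N x) ^ (2:ℝ) :=
                ENNReal.rpow_le_rpow hx (by norm_num)
              _ = (ENNReal.ofReal (A * 2 ^ k)) ^ (2:ℝ) * (N x) ^ (2:ℝ) :=
                ENNReal.mul_rpow_of_nonneg _ _ (by norm_num)
              _ ≤ (ENNReal.ofReal (A * 2 ^ k)) ^ (2:ℝ) * (ENNReal.ofReal c₀ * N x) := by
                refine mul_le_mul_right ?_ _
                rw [ENNReal.rpow_two, sq]
                exact mul_le_mul_left (hNle x) _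
        _ = (ENNReal.ofReal (A * 2 ^ k)) ^ (2:ℝ) * ENNReal.ofReal c₀ * ∫⁻ x, N x ∂μ := by
            rw [lintegral_const_mul _ (hNm.const_mul _), lintegral_const_mul _ hNm, mul_assoc]
        _ ≤ _ := mul_le_mul_right hNint _
    have hkey : A * 2 ^ k * (c₀ ^ ((1:ℝ)/2) * (c * 2 ^ (-(k:ℝ)*p)) ^ ((1:ℝ)/2))
        = (A * c₀ ^ ((1:ℝ)/2) * c ^ ((1:ℝ)/2)) * 2 ^ ((k:ℝ) * (1 - p/2)) := by
      have e1 : ((2:ℝ) ^ (-(k:ℝ)*p)) ^ ((1:ℝ)/2) = (2:ℝ) ^ ((-(k:ℝ)*p) * (1/2)) :=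
        (Real.rpow_mul two_pos.le _ _).symm
      have e2 : (2:ℝ) ^ k = (2:ℝ) ^ ((k:ℝ)) := (Real.rpow_intCast 2 k).symm
      have e3 : (2:ℝ) ^ ((k:ℝ)) * (2:ℝ) ^ ((-(k:ℝ)*p) * (1/2)) = (2:ℝ) ^ ((k:ℝ) * (1 - p/2)) := by
        rw [← Real.rpow_add two_pos]
        congr 1
        ring
      rw [Real.mul_rpow hc.le (Real.rpow_pos_of_pos two_pos _).le, e1, e2, ← e3]
      ring
    calc (∫⁻ x, (h j x) ^ (2:ℝ) ∂μ) ^ ((1:ℝ)/2)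
        ≤ ((ENNReal.ofReal (A * 2 ^ k)) ^ (2:ℝ) * ENNReal.ofReal c₀ *
            ENNReal.ofReal (c * 2 ^ (-(k:ℝ) * p))) ^ ((1:ℝ)/2) :=
          ENNReal.rpow_le_rpow hint (by norm_num)
      _ = ENNReal.ofReal (A * 2 ^ k) * ((ENNReal.ofReal c₀) ^ ((1:ℝ)/2) *
            (ENNReal.ofReal (c * 2 ^ (-(k:ℝ)*p))) ^ ((1:ℝ)/2)) := by
          rw [ENNReal.mul_rpow_of_nonneg _ _ (by norm_num : (0:ℝ) ≤ 1/2),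
            ENNReal.mul_rpow_of_nonneg _ _ (by norm_num : (0:ℝ) ≤ 1/2),
            ← ENNReal.rpow_mul]
          norm_num
          ring
      _ = ENNReal.ofReal ((A * c₀ ^ ((1:ℝ)/2) * c ^ ((1:ℝ)/2)) * 2 ^ ((k:ℝ) * (1 - p/2))) := by
          rw [ENNReal.ofReal_rpow_of_pos hc₀, ENNReal.ofReal_rpow_of_pos (by positivity),
            ← ENNReal.ofReal_mul (by positivity), ← ENNReal.ofReal_mul hA2.le, hkey]
  have hgeom : ∑' j : ℕ, ENNReal.ofReal ((A * c₀ ^ ((1:ℝ)/2) * c ^ ((1:ℝ)/2)) *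
        2 ^ (((k₀ - j : ℤ):ℝ) * (1 - p/2)))
      = ENNReal.ofReal ((1 - r)⁻¹ * A * c₀ ^ ((1:ℝ)/2) * c ^ ((1:ℝ)/2) *
          2 ^ ((k₀:ℝ) * (1 - p/2))) := by
    have hK : (0:ℝ) ≤ (A * c₀ ^ ((1:ℝ)/2) * c ^ ((1:ℝ)/2)) * 2 ^ ((k₀:ℝ) * (1 - p/2)) := by
      positivity
    have hsplit : ∀ j : ℕ, ((A * c₀ ^ ((1:ℝ)/2) * c ^ ((1:ℝ)/2)) *
        2 ^ (((k₀ - j : ℤ):ℝ) * (1 - p/2)))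
        = ((A * c₀ ^ ((1:ℝ)/2) * c ^ ((1:ℝ)/2)) * 2 ^ ((k₀:ℝ) * (1 - p/2))) * r ^ j := by
      intro j
      have hexp : (((k₀ - j : ℤ)):ℝ) * (1 - p/2) = (k₀:ℝ) * (1 - p/2) + (p/2 - 1) * (j:ℝ) := by
        push_cast
        ring
      have hrj : (2:ℝ) ^ ((p/2 - 1) * (j:ℝ)) = r ^ j := by
        rw [Real.rpow_mul two_pos.le, ← hrdef, Real.rpow_natCast]
      rw [hexp, Real.rpow_add two_pos, hrj]
      ring
    calc ∑' j : ℕ, ENNReal.ofReal ((A * c₀ ^ ((1:ℝ)/2) * c ^ ((1:ℝ)/2)) *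
          2 ^ (((k₀ - j : ℤ):ℝ) * (1 - p/2)))
        = ∑' j : ℕ, ENNReal.ofReal ((A * c₀ ^ ((1:ℝ)/2) * c ^ ((1:ℝ)/2)) *
            2 ^ ((k₀:ℝ) * (1 - p/2))) * (ENNReal.ofReal r) ^ j := by
          refine tsum_congr fun j => ?_
          rw [hsplit j, ENNReal.ofReal_mul hK, ENNReal.ofReal_pow hr0.le]
      _ = ENNReal.ofReal ((A * c₀ ^ ((1:ℝ)/2) * c ^ ((1:ℝ)/2)) *
            2 ^ ((k₀:ℝ) * (1 - p/2))) * (1 - ENNReal.ofReal r)⁻¹ := by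
          rw [ENNReal.tsum_mul_left, ENNReal.tsum_geometric]
      _ = ENNReal.ofReal ((1 - r)⁻¹ * A * c₀ ^ ((1:ℝ)/2) * c ^ ((1:ℝ)/2) *
            2 ^ ((k₀:ℝ) * (1 - p/2))) := by
          rw [← ENNReal.ofReal_one, ← ENNReal.ofReal_sub _ hr0.le,
            ← ENNReal.ofReal_inv_of_pos (by linarith), ← ENNReal.ofReal_mul hK]
          congr 1
          ring
  calc (∫⁻ x : En n,
          (‖∑' (k : {m : ℤ // m ≤ k₀}) (i : ℕ), b k.1 i x‖₊ : ℝ≥0∞) ^ (2 : ℝ) *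
            ENNReal.ofReal (w x)) ^ ((1 : ℝ) / 2)
      = (∫⁻ x, (‖∑' (k : {m : ℤ // m ≤ k₀}) (i : ℕ), b k.1 i x‖₊ : ℝ≥0∞) ^ (2 : ℝ) ∂μ)
          ^ ((1 : ℝ) / 2) := by
        rw [hμg]
    _ ≤ (∫⁻ x, (∑' j, h j x) ^ (2:ℝ) ∂μ) ^ ((1:ℝ)/2) :=
        ENNReal.rpow_le_rpow (lintegral_mono fun x =>
          ENNReal.rpow_le_rpow (hpt x) (by norm_num)) (by norm_num)
    _ ≤ ∑' j, (∫⁻ x, (h j x) ^ (2:ℝ) ∂μ) ^ ((1:ℝ)/2) := aux_tsum_Lp μ h hhm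
    _ ≤ ∑' j : ℕ, ENNReal.ofReal ((A * c₀ ^ ((1:ℝ)/2) * c ^ ((1:ℝ)/2)) *
          2 ^ (((k₀ - j : ℤ):ℝ) * (1 - p/2))) := ENNReal.tsum_le_tsum hTj
    _ = ENNReal.ofReal ((1 - r)⁻¹ * A * c₀ ^ ((1:ℝ)/2) * c ^ ((1:ℝ)/2) *
          2 ^ ((k₀:ℝ) * (1 - p/2))) := hgeom
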